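/- arXiv:1907.05629 — 2 statements merged into one kernel-verified Lean document; each statement's English description precedes it below -/
import Mathlib

section
/- Let θ be an inner function with θ̂(0) = ⟨θ, 𝟙⟩ = 0 (equivalently 𝟙 ∈ K_θ), and let p be an isometric multiplier on K_θ; note p = p·𝟙 ∈ H², and set p(0) = ⟨p, 𝟙⟩. Then for every h ∈ K_θ one has ⟨p·h, conj(p(0))·p⟩ = ⟨p·h, 𝟙⟩; that is, conj(p(0))·p is the orthogonal projection of 𝟙 onto the closed subspace pK_θ. -/
open MeasureTheory Complex Filter

noncomputable section

namespace HankelSchmidt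

instance fact_two_pi_pos : Fact (0 < 2 * Real.pi) := ⟨Real.two_pi_pos⟩

/-- The circle `𝕋`, realized as `ℝ / 2πℤ`. -/
abbrev Tc : Type := AddCircle (2 * Real.pi)

/-- Normalized arc-length (Haar) measure on the circle. -/
abbrev muc : Measure Tc := AddCircle.haarAddCircle

/-- The space `L²(𝕋)`. -/
abbrev Ltwo := Lp ℂ 2 muc

/-- The Hardy space `H²`: the subspace of `L²(𝕋)` of functions whose Fourier coefficients
of negative index vanish. -/
def Hardy : Submodule ℂ Ltwo where
  carrier := {f | ∀ n : ℤ, n < 0 → fourierBasis.repr f n = 0}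
  add_mem' := by
    intro a b ha hb n hn
    simp [map_add, lp.coeFn_add, ha n hn, hb n hn]
  zero_mem' := by
    intro n hn
    simp
  smul_mem' := by
    intro c a ha n hn
    simp [_root_.map_smul, lp.coeFn_smul, ha n hn]

theorem hardy_isClosed : IsClosed (Hardy : Set Ltwo) := by
  have hset : (Hardy : Set Ltwo) =
      ⋂ (n : ℤ) (_ : n < 0), {f : Ltwo | fourierBasis.repr f n = 0} := by
    ext f
    simp only [Set.mem_iInter, Set.mem_setOf_eq]
    rfl
  rw [hset]
  refine isClosed_iInter fun n => isClosed_iInter fun hn => ?_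
  have hcont : Continuous fun f : Ltwo => fourierBasis.repr f n := by
    have h1 : Continuous fun g : lp (fun _ : ℤ => ℂ) 2 => g n :=
      (continuous_apply n).comp lp.uniformContinuous_coe.continuous
    exact h1.comp fourierBasis.repr.continuous
  exact isClosed_eq hcont continuous_const

instance : CompleteSpace (Hardy : Submodule ℂ Ltwo) := hardy_isClosed.completeSpace_coe

/-- The Hardy space as a type. -/
abbrev Hd := (Hardy : Submodule ℂ Ltwo)

/-- The orthogonal projection `P : L²(𝕋) → H²`. -/
def P2 : Ltwo → Hd := fun f => Hardy.orthogonalProjectionOnto f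

/-- The orthogonal projection `P`, viewed as a map `L²(𝕋) → L²(𝕋)` with range `H²`. -/
def PL : Ltwo → Ltwo := fun f => ((P2 f : Hd) : Ltwo)

theorem fourierCoeff_congr_ae {f g : Tc → ℂ} (h : f =ᵐ[muc] g) (n : ℤ) :
    fourierCoeff f n = fourierCoeff g n :=
  integral_congr_ae (h.mono fun x hx => by dsimp only; rw [hx])

theorem mem_Hardy_iff {f : Ltwo} :
    f ∈ Hardy ↔ ∀ n : ℤ, n < 0 → fourierCoeff (f : Tc → ℂ) n = 0 := by
  constructor
  · intro hf n hn; rw [← fourierBasis_repr]; exact hf n hn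
  · intro hf n hn; rw [fourierBasis_repr]; exact hf n hn

/-- Pointwise multiplication by a bounded measurable function preserves `L²`. -/
theorem memLp_mul_of_bounded {g : Tc → ℂ} (hg : AEStronglyMeasurable g muc) {C : ℝ}
    (hb : ∀ᵐ x ∂muc, ‖g x‖ ≤ C) (f : Ltwo) :
    MemLp (fun x => g x * (f : Tc → ℂ) x) 2 muc := by
  refine MemLp.of_le_mul (c := C) (Lp.memLp f) (hg.mul (Lp.aestronglyMeasurable f)) ?_
  filter_upwards [hb] with x hx
  rw [norm_mul]
  exact mul_le_mul_of_nonneg_right hx (norm_nonneg _)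

theorem fourier_abs (n : ℤ) (x : Tc) : ‖fourier n x‖ = 1 := by
  rw [fourier_apply]; exact Circle.norm_coe _

theorem fourier_norm_one (n : ℤ) (x : Tc) : ‖fourier n x‖ ≤ 1 :=
  le_of_eq (fourier_abs n x)

/-- Multiplication of an `L²` function by the monomial `z^n`. -/
def mulF (n : ℤ) (f : Ltwo) : Ltwo :=
  (memLp_mul_of_bounded ((map_continuous (fourier n)).aestronglyMeasurable)
    (Eventually.of_forall (fourier_norm_one n)) f).toLp _

theorem mulF_coe (n : ℤ) (f : Ltwo) :
    (mulF n f : Tc → ℂ) =ᵐ[muc] fun x => fourier n x * (f : Tc → ℂ) x :=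
  MemLp.coeFn_toLp _

theorem fourierCoeff_fourier_mul (f : Tc → ℂ) (m n : ℤ) :
    fourierCoeff (fun x => fourier m x * f x) n = fourierCoeff f (n - m) := by
  unfold fourierCoeff
  refine integral_congr_ae (Eventually.of_forall fun x => ?_)
  have h : @fourier (2 * Real.pi) (-(n - m)) x = fourier (-n) x * fourier m x := by
    rw [show -(n - m) = -n + m by ring, fourier_add]
  simp only [smul_eq_mul, h]
  ring

/-- The shift operator `S : H² → H²`, `(Sf)(z) = z·f(z)`. -/
def Sop (f : Hd) : Hd :=
  ⟨mulF 1 (f : Ltwo), by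
    rw [mem_Hardy_iff]
    intro n hn
    rw [fourierCoeff_congr_ae (mulF_coe 1 (f : Ltwo)) n, fourierCoeff_fourier_mul]
    exact (mem_Hardy_iff.mp f.2) (n - 1) (by omega)⟩

/-- The adjoint shift `S* : H² → H²`, `S*f = P(z̄·f)`. -/
def SstarOp (f : Hd) : Hd := P2 (mulF (-1) (f : Ltwo))

/-- The constant function `𝟙 ∈ H²`. -/
def oneH : Hd :=
  ⟨fourierLp 2 0, by
    rw [mem_Hardy_iff]
    intro n hn
    rw [← fourierBasis_repr]
    have h1 : (fourierLp (T := 2 * Real.pi) 2 0) = fourierBasis 0 := by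
      rw [coe_fourierBasis]
    rw [h1, HilbertBasis.repr_self, lp.single_apply]
    simp [Pi.single_apply, show n ≠ 0 by omega]⟩

/-- The inner product on `H²`, linear in the FIRST argument (the paper's convention
`⟨f, g⟩ = ∫ f ḡ`). -/
def ipH (f g : Hd) : ℂ := @inner ℂ Ltwo _ (g : Ltwo) (f : Ltwo)

/-- The inner product on `L²(𝕋)`, linear in the FIRST argument. -/
def ipL (f g : Ltwo) : ℂ := @inner ℂ Ltwo _ g f

/-- `θ ∈ H²` is an inner function if `|θ(z)| = 1` a.e. on `𝕋`. -/
def IsInnerFn (θ : Hd) : Prop := ∀ᵐ x ∂muc, ‖((θ : Ltwo) : Tc → ℂ) x‖ = 1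

/-- The set `θ·H² ⊆ L²(𝕋)` of pointwise a.e. products `θ·f`, `f ∈ H²`. -/
def thetaHardy (θ : Hd) : Set Ltwo :=
  {g : Ltwo | ∃ f : Hd, (g : Tc → ℂ) =ᵐ[muc]
    fun x => ((θ : Ltwo) : Tc → ℂ) x * ((f : Ltwo) : Tc → ℂ) x}

/-- The model space `K_θ = H² ∩ (θH²)^⊥`, as a subset of `L²(𝕋)`. -/
def KspaceL (θ : Hd) : Set Ltwo :=
  {h : Ltwo | h ∈ Hardy ∧ ∀ g ∈ thetaHardy θ, ipL h g = 0}

/-- The model space `K_θ`, as a subset of `H²`. -/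
def Kspace (θ : Hd) : Set Hd := {h : Hd | (h : Ltwo) ∈ KspaceL θ}

/-- `p` is an isometric multiplier on `K_θ`: `p` is measurable and, for every `h ∈ K_θ`,
the pointwise product `p·h` lies in `H²` and has the same norm as `h`. -/
def IsIsomMult (p : Tc → ℂ) (θ : Hd) : Prop :=
  Measurable p ∧ ∀ h ∈ Kspace θ, ∃ g : Hd,
    ((g : Ltwo) : Tc → ℂ) =ᵐ[muc] (fun x => p x * ((h : Ltwo) : Tc → ℂ) x) ∧
    ‖(g : Ltwo)‖ = ‖(h : Ltwo)‖

/-- The subspace `p·K_θ = {p·h : h ∈ K_θ}` of `H²`. -/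
def wModel (p : Tc → ℂ) (θ : Hd) : Set Hd :=
  {g : Hd | ∃ h ∈ Kspace θ, ((g : Ltwo) : Tc → ℂ) =ᵐ[muc]
    fun x => p x * ((h : Ltwo) : Tc → ℂ) x}

/-- A bounded Hankel operator on `H²`: a continuous antilinear map `H : H² → H²`
satisfying `S*H = HS`. -/
def IsHankelOp (H : Hd →L⋆[ℂ] Hd) : Prop := ∀ f : Hd, SstarOp (H f) = H (Sop f)

/-- A bounded measurable symbol on the circle (an `L^∞` function). -/
def IsBddFn (u : Tc → ℂ) : Prop := Measurable u ∧ ∃ C : ℝ, ∀ᵐ x ∂muc, ‖u x‖ ≤ C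

theorem memLp_mul_conj {u : Tc → ℂ} (hu : IsBddFn u) (f : Ltwo) :
    MemLp (fun x => u x * (starRingEnd ℂ) ((f : Tc → ℂ) x)) 2 muc := by
  obtain ⟨hmeas, C, hC⟩ := hu
  refine MemLp.of_le_mul (c := C) (Lp.memLp f)
    (hmeas.aestronglyMeasurable.mul
      (continuous_star.comp_aestronglyMeasurable (Lp.aestronglyMeasurable f))) ?_
  filter_upwards [hC] with x hx
  rw [norm_mul, RCLike.norm_conj]
  exact mul_le_mul_of_nonneg_right hx (norm_nonneg _)

/-- The Hankel operator with symbol `u`: `H_u f = P(u·f̄)`, defined on all of `L²(𝕋)`. -/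
def hankelL (u : Tc → ℂ) (hu : IsBddFn u) : Ltwo → Ltwo :=
  fun f => PL ((memLp_mul_conj hu f).toLp _)

/-- The Möbius transformation `μ(z) = (α − z)/(1 − ᾱz)` of the unit disk. -/
def mobius (α z : ℂ) : ℂ := (α - z) / (1 - (starRingEnd ℂ) α * z)

/-- The point `e^{ix} ∈ ℂ` corresponding to `x ∈ 𝕋`. -/
def circlePt (x : Tc) : ℂ := fourier 1 x

/-- The Möbius transformation `μ` viewed as a self-map of `𝕋`. -/
def mobiusT (α : ℂ) (x : Tc) : Tc := ((Complex.arg (mobius α (circlePt x)) : ℝ) : Tc)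

/-- The weight `√(1 − |α|²)/(1 − ᾱz)` in the definition of `U_μ`. -/
def umuWeight (α : ℂ) (x : Tc) : ℂ :=
  (Real.sqrt (1 - ‖α‖ ^ 2) : ℂ) / (1 - (starRingEnd ℂ) α * circlePt x)

/-- `U` is the operator `U_μ`: `(U_μ f)(z) = (√(1 − |α|²)/(1 − ᾱz))·f(μ(z))` a.e. -/
def IsUmu (α : ℂ) (U : Ltwo → Ltwo) : Prop :=
  ∀ f : Ltwo, ((U f : Ltwo) : Tc → ℂ) =ᵐ[muc]
    fun x => umuWeight α x * (f : Tc → ℂ) (mobiusT α x)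


/-! ### Auxiliary lemmas -/

theorem fourierCoeff_conj_fn (f : Tc → ℂ) (n : ℤ) :
    fourierCoeff (fun x => (starRingEnd ℂ) (f x)) n = (starRingEnd ℂ) (fourierCoeff f (-n)) := by
  unfold fourierCoeff
  rw [← integral_conj]
  refine integral_congr_ae (Eventually.of_forall fun x => ?_)
  simp only [smul_eq_mul, map_mul, neg_neg]
  rw [fourier_neg]

/-- The complex conjugate of an `L²` function, as an `L²` element. -/
def conjL (f : Ltwo) : Ltwo :=
  MemLp.toLp (fun x => (starRingEnd ℂ) ((f : Tc → ℂ) x))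
    ((Lp.memLp f).of_le
      (continuous_star.comp_aestronglyMeasurable (Lp.aestronglyMeasurable f))
      (Eventually.of_forall fun x => le_of_eq (RCLike.norm_conj _)))

theorem conjL_coe (f : Ltwo) :
    (conjL f : Tc → ℂ) =ᵐ[muc] fun x => (starRingEnd ℂ) ((f : Tc → ℂ) x) :=
  MemLp.coeFn_toLp _

/-- Parseval's identity for the Fourier basis. -/
theorem inner_eq_tsum_fourier (f g : Ltwo) :
    (inner ℂ f g : ℂ) =
      ∑' n : ℤ, (starRingEnd ℂ) (fourierCoeff (f : Tc → ℂ) n) * fourierCoeff (g : Tc → ℂ) n := by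
  rw [← fourierBasis.repr.inner_map_map f g, lp.inner_eq_tsum]
  congr 1
  ext n
  rw [fourierBasis_repr, fourierBasis_repr]
  exact RCLike.inner_apply' _ _

/-- The zeroth Fourier coefficient of an a.e. product of two `H²` functions is the product
of the zeroth Fourier coefficients. -/
theorem fourierCoeff_mul_zero (f₁ f₂ : Hd) (q : Ltwo)
    (hq : (q : Tc → ℂ) =ᵐ[muc]
      fun x => ((f₁ : Ltwo) : Tc → ℂ) x * ((f₂ : Ltwo) : Tc → ℂ) x) :
    fourierCoeff (q : Tc → ℂ) 0 =
      fourierCoeff ((f₁ : Ltwo) : Tc → ℂ) 0 * fourierCoeff ((f₂ : Ltwo) : Tc → ℂ) 0 := by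
  have h1 : fourierCoeff (q : Tc → ℂ) 0 = inner ℂ (conjL (f₁ : Ltwo)) ((f₂ : Ltwo)) := by
    rw [L2.inner_def]
    unfold fourierCoeff
    refine integral_congr_ae ?_
    filter_upwards [hq, conjL_coe (f₁ : Ltwo)] with x hx hcx
    rw [hcx]
    simp only [neg_zero, smul_eq_mul, hx, RCLike.inner_apply', starRingEnd_self_apply,
      star_star, fourier_zero, one_mul]
  rw [h1, inner_eq_tsum_fourier]
  have hterm : ∀ n : ℤ,
      (starRingEnd ℂ) (fourierCoeff ((conjL (f₁ : Ltwo)) : Tc → ℂ) n) *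
        fourierCoeff (((f₂ : Ltwo)) : Tc → ℂ) n =
      fourierCoeff ((f₁ : Ltwo) : Tc → ℂ) (-n) * fourierCoeff ((f₂ : Ltwo) : Tc → ℂ) n := by
    intro n
    rw [fourierCoeff_congr_ae (conjL_coe (f₁ : Ltwo)) n, fourierCoeff_conj_fn]
    simp
  rw [tsum_congr hterm, tsum_eq_single 0 ?_]
  · simp
  · intro n hn
    rcases lt_trichotomy n 0 with hlt | heq | hgt
    · rw [mem_Hardy_iff.mp f₂.2 n hlt, mul_zero]
    · exact absurd heq hn
    · rw [mem_Hardy_iff.mp f₁.2 (-n) (by omega), zero_mul]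

theorem inner_oneH (f : Ltwo) :
    (inner ℂ ((oneH : Hd) : Ltwo) f : ℂ) = fourierCoeff (f : Tc → ℂ) 0 := by
  have h1 : ((oneH : Hd) : Ltwo) = fourierBasis 0 := by
    show (fourierLp (T := 2 * Real.pi) 2 0) = fourierBasis 0
    rw [coe_fourierBasis]
  rw [h1, ← HilbertBasis.repr_apply_apply, fourierBasis_repr]

/-- Polarization: two pairs with all the same combined norms have the same inner product. -/
theorem inner_eq_of_norm_eq (x₁ x₂ y₁ y₂ : Ltwo)
    (hc : ∀ c : ℂ, ‖x₁ + c • x₂‖ = ‖y₁ + c • y₂‖) :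
    (inner ℂ x₁ x₂ : ℂ) = inner ℂ y₁ y₂ := by
  have e1 : ‖x₁ + x₂‖ = ‖y₁ + y₂‖ := by simpa using hc 1
  have e2 : ‖x₁ - x₂‖ = ‖y₁ - y₂‖ := by
    have := hc (-1)
    simpa [neg_smul, one_smul, sub_eq_add_neg] using this
  have e3 : ‖x₁ - (RCLike.I : ℂ) • x₂‖ = ‖y₁ - (RCLike.I : ℂ) • y₂‖ := by
    have := hc (-(RCLike.I : ℂ))
    simpa [neg_smul, sub_eq_add_neg] using this
  have e4 : ‖x₁ + (RCLike.I : ℂ) • x₂‖ = ‖y₁ + (RCLike.I : ℂ) • y₂‖ := hc (RCLike.I : ℂ)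
  rw [inner_eq_sum_norm_sq_div_four, inner_eq_sum_norm_sq_div_four, e1, e2, e3, e4]

theorem Kspace_add {θ a b : Hd} (ha : a ∈ Kspace θ) (hb : b ∈ Kspace θ) :
    a + b ∈ Kspace θ := by
  refine ⟨(a + b).2, fun q hq => ?_⟩
  have hco : ((a + b : Hd) : Ltwo) = (a : Ltwo) + (b : Ltwo) := rfl
  unfold ipL
  rw [hco, inner_add_right]
  have h1 := ha.2 q hq
  have h2 := hb.2 q hq
  unfold ipL at h1 h2
  rw [h1, h2, add_zero]

theorem Kspace_smul {θ : Hd} (c : ℂ) {a : Hd} (ha : a ∈ Kspace θ) :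
    c • a ∈ Kspace θ := by
  refine ⟨(c • a).2, fun q hq => ?_⟩
  have hco : ((c • a : Hd) : Ltwo) = c • (a : Ltwo) := rfl
  unfold ipL
  rw [hco, inner_smul_right]
  have h1 := ha.2 q hq
  unfold ipL at h1
  rw [h1, mul_zero]

theorem oneH_mem_Kspace {θ : Hd} (hθ0 : ipH θ oneH = 0) : oneH ∈ Kspace θ := by
  refine ⟨oneH.2, fun q hq => ?_⟩
  obtain ⟨f, hf⟩ := hq
  have h0 : fourierCoeff (q : Tc → ℂ) 0 =
      fourierCoeff ((θ : Ltwo) : Tc → ℂ) 0 * fourierCoeff ((f : Ltwo) : Tc → ℂ) 0 :=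
    fourierCoeff_mul_zero θ f q hf
  have hθ' : fourierCoeff ((θ : Ltwo) : Tc → ℂ) 0 = 0 := by
    unfold ipH at hθ0
    rwa [inner_oneH] at hθ0
  unfold ipL
  rw [← inner_conj_symm, inner_oneH, h0, hθ', zero_mul, map_zero]

theorem oneH_coe_ae : (((oneH : Hd) : Ltwo) : Tc → ℂ) =ᵐ[muc] fun _ => 1 := by
  filter_upwards [coeFn_fourierLp (T := 2 * Real.pi) 2 0] with x hx
  show (fourierLp (T := 2 * Real.pi) 2 0 : Tc → ℂ) x = 1
  rw [hx]
  exact fourier_zero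

/-- If `θ(0) = 0` and `p` is an isometric multiplier on `K_θ`, then
`⟨p·h, p(0)̄·p⟩ = ⟨p·h, 𝟙⟩` for all `h ∈ K_θ`. -/
theorem projection_of_one_onto_weighted_model
    (θ : Hd) (hθ : IsInnerFn θ) (hθ0 : ipH θ oneH = 0)
    (p : Tc → ℂ) (hp : IsIsomMult p θ)
    (P0 : Hd) (hP0 : ((P0 : Ltwo) : Tc → ℂ) =ᵐ[muc] p) :
    ∀ h ∈ Kspace θ, ∀ g : Hd,
      (((g : Ltwo) : Tc → ℂ) =ᵐ[muc] fun x => p x * ((h : Ltwo) : Tc → ℂ) x) →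
      ipH g ((starRingEnd ℂ) (ipH P0 oneH) • P0) = ipH g oneH := by
  intro h hh g hg
  have h1mem : oneH ∈ Kspace θ := oneH_mem_Kspace hθ0
  -- norm equality for the polarization argument
  have hnorm : ∀ c : ℂ,
      ‖(P0 : Ltwo) + c • (g : Ltwo)‖ = ‖((oneH : Hd) : Ltwo) + c • (h : Ltwo)‖ := by
    intro c
    have hmem : oneH + c • h ∈ Kspace θ := Kspace_add h1mem (Kspace_smul c hh)
    obtain ⟨g', hg'eq, hg'norm⟩ := hp.2 _ hmem
    have hco : (((oneH + c • h : Hd)) : Ltwo) = ((oneH : Hd) : Ltwo) + c • (h : Ltwo) := rfl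
    have hgg : (g' : Ltwo) = (P0 : Ltwo) + c • (g : Ltwo) := by
      apply Lp.ext
      rw [hco] at hg'eq
      filter_upwards [hg'eq, hg, hP0, oneH_coe_ae,
        Lp.coeFn_add ((oneH : Hd) : Ltwo) (c • (h : Ltwo)),
        Lp.coeFn_smul c ((h : Ltwo)),
        Lp.coeFn_add (P0 : Ltwo) (c • (g : Ltwo)),
        Lp.coeFn_smul c ((g : Ltwo))] with x e1 e2 e3 e4 e5 e6 e7 e8
      rw [e7, Pi.add_apply, e8, Pi.smul_apply, e1, e5, Pi.add_apply, e6, Pi.smul_apply,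
        e2, e3, e4]
      simp only [smul_eq_mul]
      ring
    rw [← hgg, hg'norm, hco]
  have hinner : (inner ℂ (P0 : Ltwo) (g : Ltwo) : ℂ) =
      inner ℂ ((oneH : Hd) : Ltwo) ((h : Ltwo)) :=
    inner_eq_of_norm_eq _ _ _ _ hnorm
  have hgP0h : ((g : Ltwo) : Tc → ℂ) =ᵐ[muc]
      fun x => ((P0 : Ltwo) : Tc → ℂ) x * ((h : Ltwo) : Tc → ℂ) x := by
    filter_upwards [hg, hP0] with x e1 e2
    rw [e1, e2]
  have hg0 : fourierCoeff ((g : Ltwo) : Tc → ℂ) 0 =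
      fourierCoeff ((P0 : Ltwo) : Tc → ℂ) 0 * fourierCoeff ((h : Ltwo) : Tc → ℂ) 0 :=
    fourierCoeff_mul_zero P0 h (g : Ltwo) hgP0h
  unfold ipH
  have hco2 : (((starRingEnd ℂ) (@inner ℂ Ltwo _ ((oneH : Hd) : Ltwo) (P0 : Ltwo)) • P0 : Hd) :
      Ltwo) = (starRingEnd ℂ) (@inner ℂ Ltwo _ ((oneH : Hd) : Ltwo) (P0 : Ltwo)) • (P0 : Ltwo) :=
    rfl
  rw [hco2, inner_smul_left, Complex.conj_conj]
  rw [inner_oneH, inner_oneH, hinner, inner_oneH, hg0]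

end HankelSchmidt
end
end

section
/- Let α ∈ ℂ with |α| < 1 and h ∈ L²(𝕋). Then U_μ(z̄·conj(h)) = −z̄·conj(U_μ h) as elements of L²(𝕋), where z̄·conj(h) denotes the function z ↦ z̄·conj(h(z)). -/
open MeasureTheory Complex Filter

noncomputable section

namespace HankelSchmidt

/-! ### Auxiliary lemmas for `umu_conj_formula` -/

lemma one_sub_conj_mul_ne_zero {α : ℂ} (hα : ‖α‖ < 1) {z : ℂ}
    (hz : ‖z‖ = 1) : 1 - (starRingEnd ℂ) α * z ≠ 0 := by
  intro h
  have h1 : (starRingEnd ℂ) α * z = 1 := by linear_combination -h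
  have h2 : ‖(starRingEnd ℂ) α * z‖ = 1 := by rw [h1]; simp
  rw [norm_mul, RCLike.norm_conj, hz, mul_one] at h2
  exact absurd h2 (ne_of_lt hα)

lemma mul_conj_eq_one' {z : ℂ} (hz : ‖z‖ = 1) : z * (starRingEnd ℂ) z = 1 := by
  rw [Complex.mul_conj]
  norm_cast
  rw [← Complex.sq_norm, hz]; norm_num

lemma key_eq' {α z : ℂ} (hz : ‖z‖ = 1) :
    1 - (starRingEnd ℂ) α * z = z * (starRingEnd ℂ) (z - α) := by
  have h := mul_conj_eq_one' hz
  rw [map_sub]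
  linear_combination -h

lemma abs_mobius {α : ℂ} (hα : ‖α‖ < 1) {z : ℂ} (hz : ‖z‖ = 1) :
    ‖mobius α z‖ = 1 := by
  have hd := one_sub_conj_mul_ne_zero hα hz
  have hk := key_eq' (α := α) hz
  have hza : z - α ≠ 0 := by
    intro h0
    apply hd
    rw [hk, h0]; simp
  rw [mobius, norm_div, hk, norm_mul, RCLike.norm_conj, hz, one_mul,
    norm_sub_rev α z]
  exact div_self (norm_ne_zero_iff.mpr hza)

lemma one_sub_conj_mul_self_ne_zero {α : ℂ} (hα : ‖α‖ < 1) :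
    1 - (starRingEnd ℂ) α * α ≠ 0 := by
  intro h
  have h1 : (starRingEnd ℂ) α * α = 1 := by linear_combination -h
  have h2 : ‖(starRingEnd ℂ) α * α‖ = 1 := by rw [h1]; simp
  rw [norm_mul, RCLike.norm_conj] at h2
  nlinarith [norm_nonneg α]

lemma mobius_mobius {α : ℂ} (hα : ‖α‖ < 1) {z : ℂ}
    (h1 : 1 - (starRingEnd ℂ) α * z ≠ 0) : mobius α (mobius α z) = z := by
  have h2 := one_sub_conj_mul_self_ne_zero hα
  have h3 : 1 - (starRingEnd ℂ) α * mobius α z =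
      (1 - (starRingEnd ℂ) α * α) / (1 - (starRingEnd ℂ) α * z) := by
    rw [mobius]; field_simp; ring
  rw [mobius, h3, mobius]
  rw [div_eq_iff (div_ne_zero h2 h1)]
  have h1' : 1 - z * (starRingEnd ℂ) α ≠ 0 := by rwa [mul_comm]
  field_simp
  ring

lemma circlePt_coe (r : ℝ) : circlePt ((r : ℝ) : Tc) = Complex.exp (r * Complex.I) := by
  rw [circlePt, fourier_coe_apply]
  congr 1
  push_cast
  have : (Real.pi : ℂ) ≠ 0 := by exact_mod_cast Real.pi_ne_zero
  field_simp

lemma abs_circlePt (x : Tc) : ‖circlePt x‖ = 1 := by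
  rw [circlePt, fourier_apply]; exact Circle.norm_coe _

/-- The real lift of the circle Möbius map. -/
def psiR (α : ℂ) (r : ℝ) : ℝ := Complex.arg (mobius α (Complex.exp (r * Complex.I)))

lemma mobiusT_coe (α : ℂ) (r : ℝ) :
    mobiusT α ((r : ℝ) : Tc) = ((psiR α r : ℝ) : Tc) := by
  rw [mobiusT, circlePt_coe]; rfl

lemma measurable_mobiusT (α : ℂ) : Measurable (mobiusT α) := by
  have hc : Measurable circlePt := (map_continuous (fourier 1)).measurable
  have hm : Measurable fun x : Tc => mobius α (circlePt x) := by
    apply Measurable.div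
    · exact measurable_const.sub hc
    · exact measurable_const.sub (measurable_const.mul hc)
  exact AddCircle.measurable_mk'.comp (Complex.measurable_arg.comp hm)

lemma circlePt_mobiusT {α : ℂ} (hα : ‖α‖ < 1) (x : Tc) :
    circlePt (mobiusT α x) = mobius α (circlePt x) := by
  rw [mobiusT, circlePt_coe]
  have h1 := Complex.norm_mul_exp_arg_mul_I (mobius α (circlePt x))
  rw [abs_mobius hα (abs_circlePt x)] at h1
  simpa using h1

lemma abs_exp_I (r : ℝ) : ‖Complex.exp (r * Complex.I)‖ = 1 := by
  simpa using Complex.norm_exp_ofReal_mul_I r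

lemma exp_psiR {α : ℂ} (hα : ‖α‖ < 1) (r : ℝ) :
    Complex.exp ((psiR α r : ℝ) * Complex.I) = mobius α (Complex.exp (r * Complex.I)) := by
  have h1 := Complex.norm_mul_exp_arg_mul_I (mobius α (Complex.exp (r * Complex.I)))
  rw [abs_mobius hα (abs_exp_I r)] at h1
  simpa [psiR] using h1

lemma coe_sub_coe (a b : ℝ) : ((a : ℝ) : Tc) - ((b : ℝ) : Tc) = ((a - b : ℝ) : Tc) := rfl

lemma coe_eq_coe_of_sub_eq_zsmul {a b : ℝ} {n : ℤ} (h : a - b = n • (2 * Real.pi)) :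
    ((a : ℝ) : Tc) = ((b : ℝ) : Tc) := by
  have h0 : ((a - b : ℝ) : Tc) = 0 := AddCircle.coe_eq_zero_iff _ |>.mpr ⟨n, h.symm⟩
  rw [← coe_sub_coe] at h0
  exact sub_eq_zero.mp h0

lemma coe_arg_exp (r : ℝ) :
    ((Complex.arg (Complex.exp (r * Complex.I)) : ℝ) : Tc) = ((r : ℝ) : Tc) := by
  rw [Complex.arg_exp_mul_I]
  refine coe_eq_coe_of_sub_eq_zsmul (n := -(toIocDiv Real.two_pi_pos (-Real.pi) r)) ?_
  rw [toIocMod, neg_zsmul]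
  ring

lemma coe_psiR_psiR {α : ℂ} (hα : ‖α‖ < 1) (r : ℝ) :
    ((psiR α (psiR α r) : ℝ) : Tc) = ((r : ℝ) : Tc) := by
  have h1 : psiR α (psiR α r) = Complex.arg (Complex.exp (r * Complex.I)) := by
    rw [psiR, exp_psiR hα, mobius_mobius hα (one_sub_conj_mul_ne_zero hα (abs_exp_I r))]
  rw [h1, coe_arg_exp]

lemma countable_exp_fiber (w : ℂ) :
    Set.Countable {r : ℝ | Complex.exp (r * Complex.I) = w} := by
  set E := {r : ℝ | Complex.exp (r * Complex.I) = w} with hE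
  rcases Set.eq_empty_or_nonempty E with h | ⟨r₀, hr₀⟩
  · rw [h]; exact Set.countable_empty
  · have hsub : E ⊆ Set.range (fun n : ℤ => r₀ + n * (2 * Real.pi)) := by
      intro r hr
      have h1 : Complex.exp ((r : ℂ) * Complex.I) = Complex.exp ((r₀ : ℂ) * Complex.I) := by
        rw [hr, hr₀]
      rw [Complex.exp_eq_exp_iff_exists_int] at h1
      obtain ⟨n, hn⟩ := h1
      refine ⟨n, ?_⟩
      have h2 := congrArg Complex.im hn
      push_cast at h2
      simp at h2
      push_cast
      linarith [h2]
    exact Set.Countable.mono hsub (Set.countable_range _)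

lemma psiR_diffAt {α : ℂ} (hα : ‖α‖ < 1) {r : ℝ}
    (hr : Complex.exp (r * Complex.I) ≠ (1 + α) / (1 + (starRingEnd ℂ) α)) :
    DifferentiableAt ℝ (psiR α) r := by
  have hψ : psiR α =
      fun t : ℝ => (Complex.log (mobius α (Complex.exp ((t : ℂ) * Complex.I)))).im :=
    funext fun t => (Complex.log_im _).symm
  rw [hψ]
  have hone : (1 : ℂ) + (starRingEnd ℂ) α ≠ 0 := by
    intro h
    have h1 : ‖(starRingEnd ℂ) α‖ = 1 := by
      rw [show (starRingEnd ℂ) α = -1 by linear_combination h]; simp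
    rw [RCLike.norm_conj] at h1
    exact absurd h1 (ne_of_lt hα)
  have hden : 1 - (starRingEnd ℂ) α * Complex.exp (r * Complex.I) ≠ 0 :=
    one_sub_conj_mul_ne_zero hα (abs_exp_I r)
  have hslit : mobius α (Complex.exp (r * Complex.I)) ∈ Complex.slitPlane := by
    by_contra hs
    rw [Complex.mem_slitPlane_iff] at hs
    push_neg at hs
    obtain ⟨hre, him⟩ := hs
    set w := mobius α (Complex.exp (r * Complex.I)) with hw
    have habs : ‖w‖ = 1 := abs_mobius hα (abs_exp_I r)
    have hwre : w = (w.re : ℂ) := Complex.ext rfl (by simpa using him)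
    have habsre : |w.re| = 1 := by
      rw [hwre] at habs; simpa using habs
    have hwm1 : w = -1 := by
      rw [hwre]
      have : w.re = -1 := by cases abs_cases w.re <;> linarith
      rw [this]; norm_num
    apply hr
    rw [hw, mobius, div_eq_iff hden] at hwm1
    rw [eq_div_iff hone]
    linear_combination -hwm1
  have hexp : DifferentiableAt ℝ (fun t : ℝ => Complex.exp ((t : ℂ) * Complex.I)) r := by
    apply DifferentiableAt.cexp
    exact (Complex.ofRealCLM.differentiableAt).mul_const _
  have hF : DifferentiableAt ℝ (fun t : ℝ => mobius α (Complex.exp ((t : ℂ) * Complex.I))) r := by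
    simp only [mobius]
    exact ((differentiableAt_const _).sub hexp).div
      ((differentiableAt_const _).sub ((differentiableAt_const _).mul hexp)) hden
  have hlog : DifferentiableAt ℝ (fun t : ℝ =>
      Complex.log (mobius α (Complex.exp ((t : ℂ) * Complex.I)))) r :=
    DifferentiableAt.comp (g := Complex.log) r ((Complex.differentiableAt_log hslit).restrictScalars ℝ) hF
  exact (Complex.imCLM.differentiableAt).comp r hlog

lemma vol_preimage_mk_null {S : Set Tc} (hS : MeasurableSet S) (h0 : muc S = 0) :
    volume ((fun r : ℝ => ((r : ℝ) : Tc)) ⁻¹' S) = 0 := by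
  have hv : (volume : Measure Tc) S = 0 := by
    rw [AddCircle.volume_eq_smul_haarAddCircle, Measure.smul_apply, h0]
    simp
  set M := (fun r : ℝ => ((r : ℝ) : Tc)) ⁻¹' S with hM
  have hcov : M ⊆ ⋃ n : ℤ, M ∩ Set.Ioc ((0:ℝ) + n • (2*Real.pi)) (0 + (n+1) • (2*Real.pi)) := by
    intro r hr
    have hu : r ∈ ⋃ n : ℤ, Set.Ioc ((0:ℝ) + n • (2*Real.pi)) (0 + (n+1) • (2*Real.pi)) := by
      rw [iUnion_Ioc_add_zsmul Real.two_pi_pos 0]; trivial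
    obtain ⟨t, ⟨n, hn⟩, htr⟩ := hu
    exact Set.mem_iUnion.mpr ⟨n, hr, by rw [← hn] at htr; exact htr⟩
  refine measure_mono_null hcov (measure_iUnion_null fun n => ?_)
  have hproj := AddCircle.add_projection_respects_measure (T := 2*Real.pi)
    ((0:ℝ) + n • (2*Real.pi)) hS
  have hI : Set.Ioc ((0:ℝ) + n • (2*Real.pi)) (0 + (n+1) • (2*Real.pi)) =
      Set.Ioc ((0:ℝ) + n • (2*Real.pi)) (((0:ℝ) + n • (2*Real.pi)) + 2*Real.pi) := by
    rw [add_zsmul, one_zsmul]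
    ring_nf
  rw [hI]
  rw [hv] at hproj
  exact hproj.symm

lemma qmp_mobiusT {α : ℂ} (hα : ‖α‖ < 1) :
    Measure.QuasiMeasurePreserving (mobiusT α) muc muc := by
  refine ⟨measurable_mobiusT α, Measure.AbsolutelyContinuous.mk fun S hS h0 => ?_⟩
  rw [Measure.map_apply (measurable_mobiusT α) hS]
  have hTS : MeasurableSet (mobiusT α ⁻¹' S) := (measurable_mobiusT α) hS
  have hgoal : (volume : Measure Tc) (mobiusT α ⁻¹' S) = 0 → muc (mobiusT α ⁻¹' S) = 0 := by
    rw [AddCircle.volume_eq_smul_haarAddCircle, Measure.smul_apply, smul_eq_mul]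
    intro h
    rcases mul_eq_zero.mp h with h' | h'
    · exact absurd h' (by simp [ENNReal.ofReal_eq_zero]; nlinarith [Real.pi_pos])
    · exact h'
  apply hgoal
  rw [AddCircle.add_projection_respects_measure (T := 2*Real.pi) 0 hTS]
  have hpre : (QuotientAddGroup.mk ⁻¹' (mobiusT α ⁻¹' S) : Set ℝ) =
      psiR α ⁻¹' ((fun r : ℝ => ((r : ℝ) : Tc)) ⁻¹' S) := by
    ext r
    simp only [Set.mem_preimage]
    rw [show (QuotientAddGroup.mk r : Tc) = ((r : ℝ) : Tc) from rfl, mobiusT_coe]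
  rw [hpre]
  set M := ((fun r : ℝ => ((r : ℝ) : Tc)) ⁻¹' S) with hMdef
  have hM : volume M = 0 := vol_preimage_mk_null hS h0
  set w₀ := (1 + α) / (1 + (starRingEnd ℂ) α) with hw₀
  set E := {r : ℝ | Complex.exp ((r : ℂ) * Complex.I) = w₀} with hE
  have himg : volume (psiR α '' M) = 0 := by
    have hsub : psiR α '' M ⊆ psiR α '' (M \ E) ∪ psiR α '' E := by
      rintro y ⟨m, hm, hy⟩
      by_cases hmE : m ∈ E
      · exact Or.inr ⟨m, hmE, hy⟩
      · exact Or.inl ⟨m, ⟨hm, hmE⟩, hy⟩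
    refine measure_mono_null hsub (measure_union_null ?_ ?_)
    · refine MeasureTheory.addHaar_image_eq_zero_of_differentiableOn_of_addHaar_eq_zero
        volume (fun x hx => (psiR_diffAt hα hx.2).differentiableWithinAt) ?_
      exact measure_mono_null Set.diff_subset hM
    · exact (((countable_exp_fiber w₀).mono (by intro r hr; exact hr)).image _).measure_zero _
  have hsub2 : psiR α ⁻¹' M ⊆
      ⋃ n : ℤ, (fun t : ℝ => t + n • (2 * Real.pi)) '' (psiR α '' M) := by
    intro r hr
    have h1 : ((psiR α (psiR α r) : ℝ) : Tc) = ((r : ℝ) : Tc) := coe_psiR_psiR hα r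
    have h2 : ((r - psiR α (psiR α r) : ℝ) : Tc) = 0 := by
      rw [← coe_sub_coe, h1, sub_self]
    obtain ⟨n, hn⟩ := (AddCircle.coe_eq_zero_iff _).mp h2
    refine Set.mem_iUnion.mpr ⟨n, ⟨psiR α (psiR α r), ⟨psiR α r, hr, rfl⟩, ?_⟩⟩
    show psiR α (psiR α r) + n • (2 * Real.pi) = r
    linarith [hn]
  refine measure_mono_null (Set.inter_subset_left.trans hsub2)
    (measure_iUnion_null fun n => ?_)
  have himgeq : (fun t : ℝ => t + n • (2 * Real.pi)) '' (psiR α '' M) =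
      (fun t : ℝ => t + (-(n • (2 * Real.pi)))) ⁻¹' (psiR α '' M) := by
    ext y
    simp only [Set.mem_image, Set.mem_preimage]
    constructor
    · rintro ⟨t, ht, rfl⟩; simpa using ht
    · intro hy; exact ⟨y + -(n • (2*Real.pi)), hy, by ring⟩
  rw [himgeq, measure_preimage_add_right]
  exact himg

lemma key_identity {α : ℂ} (hα : ‖α‖ < 1) (x : Tc) :
    umuWeight α x * (starRingEnd ℂ) (circlePt (mobiusT α x)) =
      -((starRingEnd ℂ) (circlePt x) * (starRingEnd ℂ) (umuWeight α x)) := by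
  rw [circlePt_mobiusT hα]
  set z := circlePt x with hz
  have hz1 : ‖z‖ = 1 := abs_circlePt x
  have hd : 1 - (starRingEnd ℂ) α * z ≠ 0 := one_sub_conj_mul_ne_zero hα hz1
  have hdc : (1 : ℂ) - α * (starRingEnd ℂ) z ≠ 0 := by
    intro h
    apply hd
    have h2 := congrArg (starRingEnd ℂ) h
    simpa using h2
  have hzz : z * (starRingEnd ℂ) z = 1 := mul_conj_eq_one' hz1
  rw [umuWeight, mobius, map_div₀, map_div₀, map_sub, map_sub, map_one, map_mul,
    Complex.conj_conj, Complex.conj_ofReal]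
  rw [← hz]
  have hdc' : 1 - (starRingEnd ℂ) z * α ≠ 0 := by rwa [mul_comm]
  field_simp
  linear_combination ((-(↑(Real.sqrt (1 - ‖α‖ ^ 2)) : ℂ) * (starRingEnd ℂ) α *
    (1 - (starRingEnd ℂ) z * α)) - (↑(Real.sqrt (1 - ‖α‖ ^ 2)) : ℂ) * (starRingEnd ℂ) α *
    (starRingEnd ℂ) z * α) * hzz


/-- `U_μ(z̄·h̄) = −z̄·(U_μ h)̄` in `L²(𝕋)`. -/
theorem umu_conj_formula (α : ℂ) (hα : ‖α‖ < 1)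
    (U : Ltwo → Ltwo) (hU : IsUmu α U) (h g : Ltwo)
    (hg : (g : Tc → ℂ) =ᵐ[muc] fun x =>
      (starRingEnd ℂ) (circlePt x) * (starRingEnd ℂ) ((h : Tc → ℂ) x)) :
    ((U g : Ltwo) : Tc → ℂ) =ᵐ[muc] fun x =>
      -((starRingEnd ℂ) (circlePt x) * (starRingEnd ℂ) (((U h : Ltwo) : Tc → ℂ) x)) := by
  have hqmp := qmp_mobiusT hα
  have h1 := hU g
  have h2 := hU h
  have h3 := hqmp.ae_eq hg
  filter_upwards [h1, h2, h3] with x hx1 hx2 hx3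
  rw [hx1]
  have hx3' : (g : Tc → ℂ) (mobiusT α x) =
      (starRingEnd ℂ) (circlePt (mobiusT α x)) *
        (starRingEnd ℂ) ((h : Tc → ℂ) (mobiusT α x)) := hx3
  rw [hx3', hx2, map_mul]
  linear_combination ((starRingEnd ℂ) ((h : Tc → ℂ) (mobiusT α x))) * key_identity hα x

end HankelSchmidt
end
end
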